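/- For every real q > 1, every integer a and every natural number n ≥ 1: if ‖a‖_q < 1/q^n then n divides a. -/
import Mathlib


/-- The q-norm of an integer n: sum of 1/q^k over positive integers k not dividing n. -/
noncomputable def qnorm (q : ℝ) (n : ℤ) : ℝ :=
  ∑' k : ℕ, if 1 ≤ k ∧ ¬ ((k : ℤ) ∣ n) then 1 / q ^ k else 0

theorem stmt_7 (q : ℝ) (hq : 1 < q) (a : ℤ) (n : ℕ) (hn : 1 ≤ n)
    (h : qnorm q a < 1 / q ^ n) : (n : ℤ) ∣ a := by
  by_contra hnd
  have hq0 : 0 < q := lt_trans one_pos hq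
  set f : ℕ → ℝ := fun k => if 1 ≤ k ∧ ¬ ((k : ℤ) ∣ a) then 1 / q ^ k else 0 with hf
  have hnonneg : ∀ k, 0 ≤ f k := by
    intro k
    simp only [hf]
    split
    · positivity
    · exact le_refl 0
  have hg : Summable (fun k : ℕ => (1 / q) ^ k) := by
    apply summable_geometric_of_lt_one (by positivity)
    rw [div_lt_one hq0]; exact hq
  have hle' : ∀ k, f k ≤ (1 / q) ^ k := by
    intro k
    simp only [hf]
    split
    · rw [div_pow, one_pow]
    · positivity
  have hsum : Summable f := Summable.of_nonneg_of_le hnonneg hle' hg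
  have hle : f n ≤ qnorm q a := Summable.le_tsum hsum n (fun i _ => hnonneg i)
  have hfn : f n = 1 / q ^ n := by simp [hf, hn, hnd]
  rw [hfn] at hle
  exact absurd h (not_lt.mpr hle)
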